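/- arXiv:1801.02932 — 2 statements merged into one kernel-verified Lean document; each statement's English description precedes it below -/
import Mathlib

section
/- Let n ≥ 1 and let t = (t_{i,j,k})_{1 ≤ i < j < k ≤ n} be a family of integers such that the normal form map N_t : ℤ^n → G(t) is bijective. Let t_u = (t_{i,j,k})_{2 ≤ i < j < k ≤ n} be the subfamily of entries with all indices different from 1, and let G(t_u) be the corresponding presented group on generators b_2, …, b_n. Then the subgroup ⟨a_2, …, a_n⟩ of G(t) is isomorphic to G(t_u) via an isomorphism sending b_i to a_i for 2 ≤ i ≤ n. -/
namespace HallPoly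

/-- The ordered product `g_1^{e_1} ⋯ g_n^{e_n}` taken in increasing order of indices. -/
def prodPow {Γ : Type*} [Group Γ] (n : ℕ) (g : Fin n → Γ) (e : Fin n → ℤ) : Γ :=
  ((List.finRange n).map fun k => g k ^ e k).prod

/-- The relators of the presented group `G(t)`:
`(a_i · a_j · a_{j+1}^{t_{i,j,j+1}} ⋯ a_n^{t_{i,j,n}})⁻¹ · (a_j · a_i)` for `1 ≤ i < j ≤ n`. -/
def rels (n : ℕ) (t : Fin n → Fin n → Fin n → ℤ) : Set (FreeGroup (Fin n)) :=
  { r | ∃ i j : Fin n, i < j ∧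
      r = (FreeGroup.of i * FreeGroup.of j *
            prodPow n FreeGroup.of (fun k => if j < k then t i j k else 0))⁻¹ *
          (FreeGroup.of j * FreeGroup.of i) }

/-- The presented group `G(t)` with generators `a_1, …, a_n` and relations
`a_j·a_i = a_i·a_j·a_{j+1}^{t_{i,j,j+1}} ⋯ a_n^{t_{i,j,n}}` for `1 ≤ i < j ≤ n`. -/
abbrev G (n : ℕ) (t : Fin n → Fin n → Fin n → ℤ) : Type := PresentedGroup (rels n t)

/-- The generators `a_1, …, a_n` of `G(t)`. -/
def a (n : ℕ) (t : Fin n → Fin n → Fin n → ℤ) (i : Fin n) : G n t :=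
  PresentedGroup.of i

/-- The normal form map `N_t : ℤⁿ → G(t)`, `x ↦ a_1^{x_1} ⋯ a_n^{x_n}`. -/
def N (n : ℕ) (t : Fin n → Fin n → Fin n → ℤ) (x : Fin n → ℤ) : G n t :=
  prodPow n (a n t) x

variable {n : ℕ} {t : Fin n → Fin n → Fin n → ℤ}

lemma hom_prodPow {Γ Δ : Type*} [Group Γ] [Group Δ] (f : Γ →* Δ) (g : Fin n → Γ) (e : Fin n → ℤ) :
    f (prodPow n g e) = prodPow n (fun i => f (g i)) e := by
  unfold prodPow
  rw [← List.prod_hom _ f, List.map_map]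
  simp [Function.comp_def]

/-- The correction term. -/
def cor (t : Fin n → Fin n → Fin n → ℤ) (i j : Fin n) : G n t :=
  prodPow n (a n t) (fun k => if j < k then t i j k else 0)

lemma rel_eq (i j : Fin n) (h : i < j) :
    a n t j * a n t i = a n t i * a n t j * cor t i j := by
  have hr : ((FreeGroup.of i * FreeGroup.of j *
      prodPow n FreeGroup.of (fun k => if j < k then t i j k else 0))⁻¹ *
      (FreeGroup.of j * FreeGroup.of i)) ∈ Subgroup.normalClosure (rels n t) :=
    Subgroup.subset_normalClosure ⟨i, j, h, rfl⟩
  have h1 : PresentedGroup.mk (rels n t) ((FreeGroup.of i * FreeGroup.of j *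
      prodPow n FreeGroup.of (fun k => if j < k then t i j k else 0))⁻¹ *
      (FreeGroup.of j * FreeGroup.of i)) = 1 := (QuotientGroup.eq_one_iff _).2 hr
  rw [map_mul, map_inv, map_mul, map_mul, hom_prodPow, map_mul] at h1
  have h2 : (a n t i * a n t j * cor t i j)⁻¹ * (a n t j * a n t i) = 1 := by
    exact h1
  rw [inv_mul_eq_one] at h2
  exact h2.symm

/-- Subgroup generated by generators with index `≥ k`. -/
def H (t : Fin n → Fin n → Fin n → ℤ) (k : ℕ) : Subgroup (G n t) :=
  Subgroup.closure {g | ∃ i : Fin n, k ≤ i.val ∧ g = a n t i}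

lemma H_mono {k l : ℕ} (h : k ≤ l) : H t l ≤ H t k :=
  Subgroup.closure_mono (fun g ⟨i, hi, hg⟩ => ⟨i, h.trans hi, hg⟩)

lemma a_mem_H {k : ℕ} {i : Fin n} (h : k ≤ i.val) : a n t i ∈ H t k :=
  Subgroup.subset_closure ⟨i, h, rfl⟩

lemma prodPow_mem (K : Subgroup (G n t)) (e : Fin n → ℤ) (h : ∀ i, e i ≠ 0 → a n t i ∈ K) :
    prodPow n (a n t) e ∈ K := by
  apply Subgroup.list_prod_mem
  intro x hx
  simp only [List.mem_map, List.mem_finRange, true_and] at hx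
  obtain ⟨i, rfl⟩ := hx
  by_cases h0 : e i = 0
  · simp only [h0, zpow_zero]; exact one_mem K
  · exact Subgroup.zpow_mem _ (h i h0) _

lemma cor_mem {i j : Fin n} : cor t i j ∈ H t (j.val + 1) := by
  apply prodPow_mem
  intro k hk
  have : j < k := by by_contra hc; simp [hc] at hk
  exact a_mem_H this

/-- conj by `(a i)⁻¹` sends `H (i+1)` into itself. -/
lemma conj_inv_mem {i : Fin n} {g : G n t} (hg : g ∈ H t (i.val + 1)) :
    (a n t i)⁻¹ * g * a n t i ∈ H t (i.val + 1) := by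
  induction hg using Subgroup.closure_induction with
  | mem x hx =>
    obtain ⟨j, hj, rfl⟩ := hx
    have hij : i < j := hj
    have := rel_eq (t := t) i j hij
    have h2 : (a n t i)⁻¹ * a n t j * a n t i = a n t j * cor t i j := by
      rw [mul_assoc, this]; group
    rw [mul_assoc] at h2 ⊢
    rw [h2]
    exact mul_mem (a_mem_H hj) (H_mono (by omega) cor_mem)
  | one => simpa using one_mem _
  | mul x y hx hy ihx ihy =>
    have : (a n t i)⁻¹ * (x * y) * a n t i
        = ((a n t i)⁻¹ * x * a n t i) * ((a n t i)⁻¹ * y * a n t i) := by group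
    rw [this]; exact mul_mem ihx ihy
  | inv x hx ihx =>
    have : (a n t i)⁻¹ * x⁻¹ * a n t i = ((a n t i)⁻¹ * x * a n t i)⁻¹ := by group
    rw [this]; exact inv_mem ihx

/-- The image of `H (i+1)` under conj by `(a i)⁻¹` contains each high generator. -/
lemma gen_mem_map (i : Fin n) :
    ∀ d : ℕ, ∀ j : Fin n, n - j.val ≤ d → i < j →
      a n t j ∈ (H t (i.val + 1)).map (MulAut.conj (a n t i)⁻¹).toMonoidHom := by
  intro d
  induction d with
  | zero => intro j hd hij; exact absurd hd (by have := j.isLt; omega)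
  | succ d ih =>
    intro j hd hij
    have key : a n t j = (MulAut.conj (a n t i)⁻¹) (a n t j) * (cor t i j)⁻¹ := by
      have := rel_eq (t := t) i j hij
      simp only [MulAut.conj_apply]
      rw [inv_inv]
      have h2 : (a n t i)⁻¹ * a n t j * a n t i = a n t j * cor t i j := by
        rw [mul_assoc, this]; group
      rw [h2]; group
    rw [key]
    refine mul_mem (Subgroup.mem_map_of_mem _ (a_mem_H hij)) (inv_mem ?_)
    apply prodPow_mem
    intro k hk
    have hjk : j < k := by by_contra hc; simp [hc] at hk
    exact ih k (by omega) (hij.trans hjk)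

lemma map_conj_inv_eq (i : Fin n) :
    (H t (i.val + 1)).map (MulAut.conj (a n t i)⁻¹).toMonoidHom = H t (i.val + 1) := by
  apply le_antisymm
  · rintro g ⟨h, hh, rfl⟩
    simpa [MulAut.conj_apply, mul_assoc] using conj_inv_mem hh
  · rw [H]
    apply Subgroup.closure_le _ |>.2
    rintro g ⟨j, hj, rfl⟩
    exact gen_mem_map i n j (by omega) hj

/-- conj by `a i` also preserves `H (i+1)`. -/
lemma conj_mem {i : Fin n} {g : G n t} (hg : g ∈ H t (i.val + 1)) :
    a n t i * g * (a n t i)⁻¹ ∈ H t (i.val + 1) := by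
  rw [← map_conj_inv_eq i] at hg
  obtain ⟨h, hh, rfl⟩ := hg
  simpa [MulAut.conj_apply, mul_assoc] using hh

lemma conj_zpow_mem {i : Fin n} (w : ℤ) :
    ∀ {g : G n t}, g ∈ H t (i.val + 1) → a n t i ^ w * g * (a n t i) ^ (-w) ∈ H t (i.val + 1) := by
  induction w using Int.induction_on with
  | zero => intro g hg; simpa using hg
  | succ w ihw =>
    intro g hg
    have e1 : a n t i ^ ((w : ℤ) + 1) * g * a n t i ^ (-((w : ℤ) + 1))
        = a n t i ^ (w : ℤ) * (a n t i * g * (a n t i)⁻¹) * a n t i ^ (-(w : ℤ)) := by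
      group
    rw [e1]
    exact ihw (conj_mem hg)
  | pred w ihw =>
    intro g hg
    have e1 : a n t i ^ (-(w : ℤ) - 1) * g * a n t i ^ (-(-(w : ℤ) - 1))
        = a n t i ^ (-(w : ℤ)) * ((a n t i)⁻¹ * g * a n t i) * a n t i ^ (-(-(w : ℤ))) := by
      group
    rw [e1]
    exact ihw (conj_inv_mem hg)

/-- The tail normal product starting at index `k`. -/
def P (t : Fin n → Fin n → Fin n → ℤ) (k : ℕ) (x : Fin n → ℤ) : G n t :=
  (((List.finRange n).drop k).map fun i => a n t i ^ x i).prod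

lemma mem_drop {k : ℕ} {i : Fin n} (h : i ∈ (List.finRange n).drop k) : k ≤ i.val := by
  obtain ⟨p, hp, he⟩ := List.mem_iff_getElem.1 h
  rw [List.getElem_drop] at he
  simp only [List.getElem_finRange, Fin.cast_mk] at he
  rw [← he]
  exact Nat.le_add_right k p

lemma P_congr {k : ℕ} {x y : Fin n → ℤ} (h : ∀ i : Fin n, k ≤ i.val → x i = y i) :
    P t k x = P t k y := by
  unfold P
  congr 1
  apply List.map_congr_left
  intro i hi
  rw [h i (mem_drop hi)]

lemma P_mem {k : ℕ} (x : Fin n → ℤ) : P t k x ∈ H t k := by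
  apply Subgroup.list_prod_mem
  intro g hg
  simp only [List.mem_map] at hg
  obtain ⟨i, hi, rfl⟩ := hg
  exact Subgroup.zpow_mem _ (a_mem_H (mem_drop hi)) _

lemma P_succ {k : ℕ} (hk : k < n) (x : Fin n → ℤ) :
    P t k x = a n t ⟨k, hk⟩ ^ x ⟨k, hk⟩ * P t (k + 1) x := by
  unfold P
  rw [List.drop_eq_getElem_cons (by simpa using hk), List.map_cons, List.prod_cons]
  congr <;> simp

lemma H_le_P : ∀ d k : ℕ, n - k ≤ d → ∀ g ∈ H t k, ∃ x : Fin n → ℤ, g = P t k x := by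
  intro d
  induction d with
  | zero =>
    intro k hd g hg
    refine ⟨0, ?_⟩
    have hset : {g : G n t | ∃ i : Fin n, k ≤ i.val ∧ g = a n t i} = ∅ := by
      ext g; simp only [Set.mem_setOf_eq, Set.mem_empty_iff_false, iff_false]
      rintro ⟨i, hi, -⟩
      have := i.isLt; omega
    rw [H, hset, Subgroup.closure_empty, Subgroup.mem_bot] at hg
    have hdrop : (List.finRange n).drop k = [] := by
      apply List.drop_eq_nil_of_le; simpa using by omega
    rw [hg, P, hdrop]; simp
  | succ d ih =>
    intro k hd g hg
    by_cases hk : n ≤ k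
    · exact ih k (by omega) g hg
    push_neg at hk
    set i : Fin n := ⟨k, hk⟩ with hi
    -- every element of H k has the form a i ^ z * h with h ∈ H (k+1), via closure induction
    have key : ∀ g ∈ H t k, ∃ z : ℤ, ∃ h ∈ H t (k + 1), g = a n t i ^ z * h := by
      intro g hg
      induction hg using Subgroup.closure_induction with
      | mem x hx =>
        obtain ⟨j, hj, rfl⟩ := hx
        rcases eq_or_lt_of_le hj with hji | hji
        · refine ⟨1, 1, one_mem _, ?_⟩
          have : j = i := Fin.ext hji.symm
          rw [this]; simp
        · exact ⟨0, a n t j, a_mem_H hji, by simp⟩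
      | one => exact ⟨0, 1, one_mem _, by simp⟩
      | mul x y hx hy ihx ihy =>
        obtain ⟨z, h, hh, rfl⟩ := ihx
        obtain ⟨w, h', hh', rfl⟩ := ihy
        refine ⟨z + w, (a n t i ^ (-w) * h * a n t i ^ w) * h', mul_mem ?_ hh', by group⟩
        have := conj_zpow_mem (t := t) (i := i) (-w) hh
        simpa using this
      | inv x hx ihx =>
        obtain ⟨z, h, hh, rfl⟩ := ihx
        refine ⟨-z, a n t i ^ z * h⁻¹ * a n t i ^ (-z), ?_, by group⟩
        exact conj_zpow_mem (t := t) (i := i) z (inv_mem hh)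
    obtain ⟨z, h, hh, rfl⟩ := key g hg
    obtain ⟨x, rfl⟩ := ih (k + 1) (by omega) h hh
    refine ⟨Function.update x i z, ?_⟩
    rw [P_succ hk]
    have h1 : Function.update x i z i = z := Function.update_self i z x
    have h2 : P t (k + 1) (Function.update x i z) = P t (k + 1) x := by
      apply P_congr
      intro j hj
      have : j ≠ i := by rw [hi]; intro hc; subst hc; simp at hj
      rw [Function.update_of_ne this]
    rw [h1, h2, hi]

lemma N_surjective : Function.Surjective (N n t) := by
  intro g
  have hg : g ∈ H t 0 := by
    have hset : {g : G n t | ∃ i : Fin n, 0 ≤ i.val ∧ g = a n t i}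
        = Set.range (PresentedGroup.of : Fin n → PresentedGroup (rels n t)) := by
      ext g; constructor
      · rintro ⟨i, -, rfl⟩; exact ⟨i, rfl⟩
      · rintro ⟨i, rfl⟩; exact ⟨i, Nat.zero_le _, rfl⟩
    have : H t 0 = ⊤ := by rw [H, hset, PresentedGroup.closure_range_of]
    rw [this]; trivial
  obtain ⟨x, hx⟩ := H_le_P n 0 (by omega) g hg
  exact ⟨x, by rw [hx]; rfl⟩

lemma prodPow_cons {m : ℕ} {Γ : Type*} [Group Γ] (g : Fin (m + 1) → Γ) (e : Fin (m + 1) → ℤ) :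
    prodPow (m + 1) g e = g 0 ^ e 0 * prodPow m (fun i => g i.succ) (fun i => e i.succ) := by
  unfold prodPow
  rw [List.finRange_succ, List.map_cons, List.prod_cons, List.map_map]
  rfl

section Main

variable {m : ℕ} {t : Fin (m + 1) → Fin (m + 1) → Fin (m + 1) → ℤ}
  {tu : Fin m → Fin m → Fin m → ℤ}

lemma rels_check (htu : ∀ i j k : Fin m, tu i j k = t i.succ j.succ k.succ) :
    ∀ r ∈ rels m tu, FreeGroup.lift (fun i : Fin m => a (m + 1) t i.succ) r = 1 := by
  rintro r ⟨i, j, hij, rfl⟩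
  have hc : cor t i.succ j.succ = prodPow m (fun k : Fin m => a (m + 1) t k.succ)
      (fun k => if j < k then tu i j k else 0) := by
    unfold cor
    rw [prodPow_cons]
    have h0 : (if j.succ < (0 : Fin (m + 1)) then t i.succ j.succ 0 else 0) = 0 := by
      simp [Fin.lt_def]
    rw [h0, zpow_zero, one_mul]
    congr 1
    funext k
    simp [htu, Fin.succ_lt_succ_iff]
  simp only [map_mul, map_inv, hom_prodPow, FreeGroup.lift_apply_of]
  have hrel := rel_eq (t := t) i.succ j.succ (Fin.succ_lt_succ_iff.mpr hij)
  rw [inv_mul_eq_one, hrel, hc]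

lemma psi_of (htu : ∀ i j k : Fin m, tu i j k = t i.succ j.succ k.succ) (i : Fin m) :
    PresentedGroup.toGroup (rels_check htu) (a m tu i) = a (m + 1) t i.succ :=
  PresentedGroup.toGroup.of _

lemma psi_N (htu : ∀ i j k : Fin m, tu i j k = t i.succ j.succ k.succ) (x : Fin m → ℤ) :
    PresentedGroup.toGroup (rels_check htu) (N m tu x) = N (m + 1) t (Fin.cons 0 x) := by
  unfold N
  have hfun : (fun i : Fin m => PresentedGroup.toGroup (rels_check htu) (a m tu i))
      = fun i : Fin m => a (m + 1) t i.succ := funext fun i => psi_of htu i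
  rw [hom_prodPow, prodPow_cons, hfun]
  simp only [Fin.cons_zero, Fin.cons_succ, zpow_zero, one_mul]

lemma psi_inj (hN : Function.Bijective (N (m + 1) t))
    (htu : ∀ i j k : Fin m, tu i j k = t i.succ j.succ k.succ) :
    Function.Injective (PresentedGroup.toGroup (rels_check htu)) := by
  intro g h he
  obtain ⟨x, rfl⟩ := N_surjective (t := tu) g
  obtain ⟨y, rfl⟩ := N_surjective (t := tu) h
  rw [psi_N htu, psi_N htu] at he
  have hxy := hN.1 he
  have : x = y := by
    funext i
    have := congrFun hxy i.succ
    simpa using this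
  rw [this]

lemma psi_range (htu : ∀ i j k : Fin m, tu i j k = t i.succ j.succ k.succ) :
    (PresentedGroup.toGroup (rels_check htu)).range
      = Subgroup.closure (Set.range fun i : Fin m => a (m + 1) t i.succ) := by
  have hfun : ((PresentedGroup.toGroup (rels_check htu)) ∘
      (PresentedGroup.of : Fin m → G m tu)) = fun i : Fin m => a (m + 1) t i.succ :=
    funext fun i => psi_of htu i
  rw [MonoidHom.range_eq_map, ← PresentedGroup.closure_range_of (rels m tu),
      MonoidHom.map_closure, ← Set.range_comp, hfun]

/-- If `G(t)` is consistent, the subgroup `U(t) = ⟨a_2, …, a_n⟩` of `G(t)` is isomorphic to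
the presented group `G(t_u)`, where `t_u` is the subfamily of `t` of entries with all indices
different from `1`; the isomorphism sends the `i`-th generator of `G(t_u)` to `a_{i+1}`. -/
theorem subgroup_U_iso (m : ℕ) (t : Fin (m + 1) → Fin (m + 1) → Fin (m + 1) → ℤ)
    (hN : Function.Bijective (N (m + 1) t))
    (tu : Fin m → Fin m → Fin m → ℤ)
    (htu : ∀ i j k : Fin m, tu i j k = t i.succ j.succ k.succ) :
    ∃ φ : G m tu ≃* (Subgroup.closure (Set.range fun i : Fin m => a (m + 1) t i.succ) :
        Subgroup (G (m + 1) t)),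
      ∀ i : Fin m, (φ (a m tu i) : G (m + 1) t) = a (m + 1) t i.succ := by
  refine ⟨(MonoidHom.ofInjective (psi_inj hN htu)).trans
    (MulEquiv.subgroupCongr (psi_range htu)), fun i => ?_⟩
  rw [MulEquiv.trans_apply, MulEquiv.subgroupCongr_apply, MonoidHom.ofInjective_apply,
    psi_of htu]

end Main

end HallPoly
end

section
/- Let n ≥ 2 and let t = (t_{i,j,k})_{1 ≤ i < j < k ≤ n} be a family of integers such that the normal form map N_t : ℤ^n → G(t) is bijective. Let t_v = (t_{i,j,k})_{i,j,k ≠ 2} be the subfamily of entries with all indices different from 2, and let G(t_v) be the corresponding presented group on generators b_1, b_3, …, b_n (with relations b_j·b_i = b_i·b_j·b_{j+1}^{t_{i,j,j+1}} ⋯ b_n^{t_{i,j,n}} for i < j, i, j ≠ 2). Then the subgroup ⟨a_1, a_3, …, a_n⟩ of G(t) is isomorphic to G(t_v) via an isomorphism sending b_i to a_i for each i ≠ 2. -/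
namespace HallPoly

section PP
variable {Γ Δ : Type*} [Group Γ] [Group Δ]

theorem prodPow_hom (n : ℕ) (f : Γ →* Δ) (g : Fin n → Γ) (e : Fin n → ℤ) :
    f (prodPow n g e) = prodPow n (fun k => f (g k)) e := by
  unfold prodPow
  rw [f.map_list_prod, List.map_map]
  congr 1
  simp [Function.comp_def]

theorem prodPow_zero (n : ℕ) (g : Fin n → Γ) : prodPow n g (fun _ => 0) = 1 := by
  unfold prodPow
  apply List.prod_eq_one
  simp

theorem prodPow_mem_s11 (n : ℕ) (g : Fin n → Γ) (e : Fin n → ℤ) (S : Subgroup Γ)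
    (h : ∀ k, e k ≠ 0 → g k ∈ S) : prodPow n g e ∈ S := by
  apply Subgroup.list_prod_mem
  intro x hx
  simp only [List.mem_map] at hx
  obtain ⟨k, -, rfl⟩ := hx
  by_cases hk : e k = 0
  · simp [hk, one_mem]
  · exact zpow_mem (h k hk) _

theorem prodPow_split (n : ℕ) (g : Fin n → Γ) (e : Fin n → ℤ) (j : Fin n)
    (h : ∀ k : Fin n, k < j → e k = 0) :
    prodPow n g e = g j ^ e j * prodPow n g (Function.update e j 0) := by
  unfold prodPow
  have htake : ∀ F : Fin n → Γ, (∀ k : Fin n, k < j → F k = 1) →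
      ((List.finRange n).map F).prod = (((List.finRange n).map F).drop (j:ℕ)).prod := by
    intro F hF
    conv_lhs => rw [← List.take_append_drop (j:ℕ) ((List.finRange n).map F)]
    rw [List.prod_append]
    have : (((List.finRange n).map F).take (j:ℕ)).prod = 1 := by
      apply List.prod_eq_one
      intro x hx
      rw [← List.map_take] at hx
      simp only [List.mem_map] at hx
      obtain ⟨k, hk, rfl⟩ := hx
      apply hF
      obtain ⟨idx, hidx, rfl⟩ := List.mem_take_iff_getElem.1 hk
      simp only [List.getElem_finRange]
      exact Fin.lt_def.2 (by simp; omega)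
    rw [this, one_mul]
  have hdrop : ∀ F : Fin n → Γ,
      (((List.finRange n).map F).drop (j:ℕ)) = F j :: (((List.finRange n).map F).drop ((j:ℕ)+1)) := by
    intro F
    have hlen : (j:ℕ) < ((List.finRange n).map F).length := by simp [j.2]
    rw [List.drop_eq_getElem_cons hlen]
    simp
  rw [htake _ (fun k hk => by simp [h k hk]), hdrop]
  rw [htake (fun k => g k ^ Function.update e j 0 k) (fun k hk => by
    simp only [Function.update_of_ne (Fin.ne_of_lt hk)]; simp [h k hk]), hdrop]
  simp only [Function.update_self, zpow_zero, List.prod_cons, one_mul]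
  congr 1
  rw [← List.map_drop, ← List.map_drop]
  congr 1
  apply List.map_congr_left
  intro k hk
  have hkj : k ≠ j := by
    obtain ⟨i, hi, rfl⟩ := List.mem_iff_getElem.1 hk
    simp only [List.getElem_drop, List.getElem_finRange]
    intro hcon
    have := congrArg Fin.val hcon
    simp at this
    omega
  simp [Function.update_of_ne hkj]
end PP

/- ### group-level lemmas -/
section
variable (n : ℕ) (t : Fin n → Fin n → Fin n → ℤ)

theorem rel_eq_s11 {i j : Fin n} (hij : i < j) :
    a n t j * a n t i = a n t i * a n t j *
      prodPow n (a n t) (fun k => if j < k then t i j k else 0) := by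
  have hr : ((FreeGroup.of i * FreeGroup.of j *
      prodPow n FreeGroup.of (fun k => if j < k then t i j k else 0))⁻¹ *
      (FreeGroup.of j * FreeGroup.of i)) ∈ rels n t := ⟨i, j, hij, rfl⟩
  have h1 : PresentedGroup.mk (rels n t) ((FreeGroup.of i * FreeGroup.of j *
      prodPow n FreeGroup.of (fun k => if j < k then t i j k else 0))⁻¹ *
      (FreeGroup.of j * FreeGroup.of i)) = 1 :=
    (QuotientGroup.eq_one_iff _).2 (Subgroup.subset_normalClosure hr)
  rw [map_mul, map_inv] at h1
  have h2 := (inv_mul_eq_one.1 h1)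
  rw [map_mul, map_mul, map_mul] at h2
  rw [prodPow_hom n (PresentedGroup.mk (rels n t)) FreeGroup.of] at h2
  exact h2.symm

/-- The subgroup generated by the generators of index `≥ i`. -/
def Sgt (i : ℕ) : Subgroup (G n t) :=
  Subgroup.closure { x | ∃ k : Fin n, i ≤ (k : ℕ) ∧ x = a n t k }

theorem Sgt_antitone {i i' : ℕ} (h : i ≤ i') : Sgt n t i' ≤ Sgt n t i :=
  Subgroup.closure_mono (fun x ⟨k, hk, hx⟩ => ⟨k, le_trans h hk, hx⟩)

theorem a_mem_Sgt {i : ℕ} {k : Fin n} (h : i ≤ (k : ℕ)) : a n t k ∈ Sgt n t i :=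
  Subgroup.subset_closure ⟨k, h, rfl⟩

theorem prodPow_mem_Sgt {i : ℕ} {e : Fin n → ℤ} (h : ∀ k : Fin n, (k : ℕ) < i → e k = 0) :
    prodPow n (a n t) e ∈ Sgt n t i := by
  apply prodPow_mem_s11
  intro k hk
  apply a_mem_Sgt
  by_contra hc
  exact hk (h k (by omega))

theorem Sgt_eq_bot {J : ℕ} (h : n ≤ J) : Sgt n t J = ⊥ := by
  unfold Sgt
  have hset : { x : G n t | ∃ k : Fin n, J ≤ (k : ℕ) ∧ x = a n t k } = ∅ := by
    apply Set.eq_empty_iff_forall_notMem.2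
    rintro x ⟨k, hk, -⟩
    have := k.2
    omega
  rw [hset, Subgroup.closure_empty]

theorem a_mem_normalizer :
    ∀ d J : ℕ, n ≤ J + d → ∀ i : Fin n, (i : ℕ) < J →
      a n t i ∈ Subgroup.normalizer (Sgt n t J : Set (G n t)) := by
  intro d
  induction d with
  | zero =>
    intro J hJ i hi
    rw [Sgt_eq_bot n t (by omega), Subgroup.mem_normalizer_iff]
    simp
  | succ d ih =>
    intro J hJ i hi
    by_cases hn : n ≤ J
    · -- same as base case
      rw [Sgt_eq_bot n t hn, Subgroup.mem_normalizer_iff]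
      simp
    · push_neg at hn
      -- key conjugation facts for generators
      have key : ∀ k : Fin n, J ≤ (k : ℕ) →
          (a n t i * a n t k * (a n t i)⁻¹ ∈ Sgt n t J ∧
           (a n t i)⁻¹ * a n t k * a n t i ∈ Sgt n t J) := by
        intro k hk
        have hik : i < k := Fin.lt_def.2 (by omega)
        have hrel := rel_eq_s11 n t hik
        set w := prodPow n (a n t) (fun l => if k < l then t i k l else 0) with hw
        have hwmem : w ∈ Sgt n t ((k : ℕ) + 1) := by
          apply prodPow_mem_Sgt
          intro l hl
          have : ¬ k < l := by rw [Fin.lt_def]; omega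
          simp [this]
        have hkJ : Sgt n t ((k : ℕ) + 1) ≤ Sgt n t J := Sgt_antitone n t (by omega)
        constructor
        · -- a i * a k * a i⁻¹ = a k * (a i * w⁻¹ * a i⁻¹)
          have hnorm : a n t i ∈ Subgroup.normalizer (Sgt n t ((k : ℕ) + 1) : Set (G n t)) := by
            apply ih ((k : ℕ) + 1) (by omega) i (by omega)
          have hconj : a n t i * w⁻¹ * (a n t i)⁻¹ ∈ Sgt n t ((k : ℕ) + 1) :=
            (Subgroup.mem_normalizer_iff.1 hnorm w⁻¹).1 (inv_mem hwmem)
          have h3 : a n t i * a n t k = a n t k * a n t i * w⁻¹ := by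
            rw [hrel]; group
          have heq : a n t i * a n t k * (a n t i)⁻¹ =
              a n t k * (a n t i * w⁻¹ * (a n t i)⁻¹) := by
            rw [h3]; group
          rw [heq]
          exact mul_mem (a_mem_Sgt n t hk) (hkJ hconj)
        · have heq : (a n t i)⁻¹ * a n t k * a n t i = a n t k * w := by
            rw [mul_assoc ((a n t i)⁻¹) (a n t k) (a n t i), hrel]; group
          rw [heq]
          exact mul_mem (a_mem_Sgt n t hk) (hkJ hwmem)
      -- now closure argument
      rw [Subgroup.mem_normalizer_iff]
      have hfwd : ∀ h ∈ Sgt n t J, a n t i * h * (a n t i)⁻¹ ∈ Sgt n t J := by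
        intro h hh
        induction hh using Subgroup.closure_induction with
        | mem x hx =>
          obtain ⟨k, hk, rfl⟩ := hx
          exact (key k hk).1
        | one => simpa using one_mem _
        | mul x y hx hy px py =>
          have : a n t i * (x * y) * (a n t i)⁻¹ =
              (a n t i * x * (a n t i)⁻¹) * (a n t i * y * (a n t i)⁻¹) := by group
          rw [this]; exact mul_mem px py
        | inv x hx px =>
          have : a n t i * x⁻¹ * (a n t i)⁻¹ = (a n t i * x * (a n t i)⁻¹)⁻¹ := by group
          rw [this]; exact inv_mem px
      have hbwd : ∀ h ∈ Sgt n t J, (a n t i)⁻¹ * h * a n t i ∈ Sgt n t J := by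
        intro h hh
        induction hh using Subgroup.closure_induction with
        | mem x hx =>
          obtain ⟨k, hk, rfl⟩ := hx
          exact (key k hk).2
        | one => simpa using one_mem _
        | mul x y hx hy px py =>
          have : (a n t i)⁻¹ * (x * y) * a n t i =
              ((a n t i)⁻¹ * x * a n t i) * ((a n t i)⁻¹ * y * a n t i) := by group
          rw [this]; exact mul_mem px py
        | inv x hx px =>
          have : (a n t i)⁻¹ * x⁻¹ * a n t i = ((a n t i)⁻¹ * x * a n t i)⁻¹ := by group
          rw [this]; exact inv_mem px
      intro h
      constructor
      · intro hh; exact hfwd h hh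
      · intro hh
        have := hbwd _ hh
        have heq : (a n t i)⁻¹ * (a n t i * h * (a n t i)⁻¹) * a n t i = h := by group
        rwa [heq] at this
end

namespace Surj
section
variable (n : ℕ) (t : Fin n → Fin n → Fin n → ℤ)

/-- The statement that normal forms supported in `[i, n)` absorb right multiplication by
powers of generators of index `≥ i`. -/
def RProp (i : ℕ) : Prop :=
  ∀ x : Fin n → ℤ, (∀ k : Fin n, (k : ℕ) < i → x k = 0) →
    ∀ j : Fin n, i ≤ (j : ℕ) → ∀ z : ℤ,
      ∃ x' : Fin n → ℤ, (∀ k : Fin n, (k : ℕ) < i → x' k = 0) ∧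
        N n t x * a n t j ^ z = N n t x'

theorem recombine (i' : Fin n) (x'' : Fin n → ℤ)
    (h : ∀ k : Fin n, (k : ℕ) < (i' : ℕ) + 1 → x'' k = 0) (z : ℤ) :
    a n t i' ^ z * N n t x'' = N n t (Function.update x'' i' z) := by
  have hsupp : ∀ k : Fin n, k < i' → Function.update x'' i' z k = 0 := by
    intro k hk
    rw [Function.update_of_ne (Fin.ne_of_lt hk)]
    exact h k (by rw [Fin.lt_def] at hk; omega)
  have h0 : x'' i' = 0 := h i' (by omega)
  have hs := prodPow_split n (a n t) (Function.update x'' i' z) i' hsupp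
  rw [Function.update_self, Function.update_idem] at hs
  have hupd : Function.update x'' i' (0 : ℤ) = x'' := by
    funext k
    by_cases hk : k = i'
    · subst hk; rw [Function.update_self, h0]
    · rw [Function.update_of_ne hk]
  rw [hupd] at hs
  exact hs.symm

theorem T_of_R (i : ℕ) (hR : RProp n t i) :
    ∀ g ∈ Sgt n t i, ∀ x : Fin n → ℤ, (∀ k : Fin n, (k : ℕ) < i → x k = 0) →
      ∃ x'' : Fin n → ℤ, (∀ k : Fin n, (k : ℕ) < i → x'' k = 0) ∧
        N n t x * g = N n t x'' := by
  intro g hg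
  have hg' : g ∈ (Sgt n t i).toSubmonoid := hg
  rw [Sgt, Subgroup.closure_toSubmonoid] at hg'
  clear hg
  induction hg' using Submonoid.closure_induction with
  | mem y hy =>
    rcases hy with hy | hy
    · obtain ⟨k, hk, rfl⟩ := hy
      intro x hx
      obtain ⟨x', hx', heq⟩ := hR x hx k hk 1
      exact ⟨x', hx', by rw [← heq, zpow_one]⟩
    · rw [Set.mem_inv] at hy
      obtain ⟨k, hk, hyk⟩ := hy
      have hy' : y = a n t k ^ (-1 : ℤ) := by
        rw [zpow_neg_one, ← hyk, inv_inv]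
      intro x hx
      obtain ⟨x', hx', heq⟩ := hR x hx k hk (-1)
      exact ⟨x', hx', by rw [← heq, hy']⟩
  | one =>
    intro x hx
    exact ⟨x, hx, by rw [mul_one]⟩
  | mul y z hy hz py pz =>
    intro x hx
    obtain ⟨x', hx', heq⟩ := py x hx
    obtain ⟨x'', hx'', heq'⟩ := pz x' hx'
    exact ⟨x'', hx'', by rw [← mul_assoc, heq, heq']⟩

theorem R_all : ∀ d i : ℕ, n ≤ i + d → RProp n t i := by
  intro d
  induction d with
  | zero =>
    intro i hni x hx j hj z
    have := j.2
    omega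
  | succ d ih =>
    intro i hni
    by_cases hn : n ≤ i
    · intro x hx j hj z
      have := j.2
      omega
    · push_neg at hn
      intro x hx j hj z
      set i' : Fin n := ⟨i, hn⟩ with hi'
      have hxi' : ∀ k : Fin n, k < i' → x k = 0 := by
        intro k hk
        exact hx k (by rwa [Fin.lt_def] at hk)
      have hsplit : N n t x = a n t i' ^ x i' * N n t (Function.update x i' 0) :=
        prodPow_split n (a n t) x i' hxi'
      set x1 := Function.update x i' 0 with hx1
      have hx1supp : ∀ k : Fin n, (k : ℕ) < i + 1 → x1 k = 0 := by
        intro k hk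
        by_cases hki : k = i'
        · rw [hki, hx1, Function.update_self]
        · rw [hx1, Function.update_of_ne hki]
          apply hx
          have : (k : ℕ) ≠ i := fun hc => hki (Fin.ext hc)
          omega
      rcases eq_or_lt_of_le hj with hij | hij
      · -- j = i'
        have hji' : i' = j := Fin.ext (by simp [hi']; omega)
        rw [hji'] at hsplit
        have hmem : N n t x1 ∈ Sgt n t (i + 1) := prodPow_mem_Sgt n t hx1supp
        have hnorm : a n t j ^ z ∈ Subgroup.normalizer (Sgt n t (i + 1) : Set (G n t)) :=
          zpow_mem (a_mem_normalizer n t d (i + 1) (by omega) j (by omega)) z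
        have hymem : (a n t j ^ z)⁻¹ * N n t x1 * a n t j ^ z ∈ Sgt n t (i + 1) :=
          (Subgroup.mem_normalizer_iff''.1 hnorm (N n t x1)).1 hmem
        obtain ⟨x'', hx'', heq⟩ := T_of_R n t (i + 1) (ih (i + 1) (by omega)) _ hymem
          (fun _ => 0) (fun k _ => rfl)
        rw [show N n t (fun _ => 0) = 1 from prodPow_zero n (a n t), one_mul] at heq
        refine ⟨Function.update x'' j (x j + z), ?_, ?_⟩
        · intro k hk
          have hki : k ≠ j := by
            intro hc; subst hc; omega
          rw [Function.update_of_ne hki]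
          exact hx'' k (by omega)
        · have hrecomb := recombine n t j x'' (fun k hk => hx'' k (by omega)) (x j + z)
          rw [hsplit, ← hrecomb, ← heq, zpow_add]
          group
      · -- i < j
        obtain ⟨x'', hx'', heq⟩ := ih (i + 1) (by omega) x1 hx1supp j (by omega) z
        refine ⟨Function.update x'' i' (x i'), ?_, ?_⟩
        · intro k hk
          have hki : k ≠ i' := by
            intro hc; subst hc; simp [hi'] at hk
          rw [Function.update_of_ne hki]
          exact hx'' k (by omega)
        · rw [hsplit, mul_assoc, heq,
            recombine n t i' x'' (fun k hk => hx'' k (by have : (i' : ℕ) = i := rfl; omega)) (x i')]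

theorem N_surjective : Function.Surjective (N n t) := by
  intro g
  have hg : g ∈ Sgt n t 0 := by
    have htop : Sgt n t 0 = ⊤ := by
      unfold Sgt
      rw [← PresentedGroup.closure_range_of (rels n t)]
      congr 1
      ext x
      simp only [Set.mem_setOf_eq, Set.mem_range]
      constructor
      · rintro ⟨k, -, rfl⟩; exact ⟨k, rfl⟩
      · rintro ⟨k, rfl⟩; exact ⟨k, Nat.zero_le _, rfl⟩
    rw [htop]; trivial
  obtain ⟨x'', hx'', heq⟩ := T_of_R n t 0 (R_all n t n 0 (by omega)) g hg
    (fun _ => 0) (fun k hk => by omega)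
  refine ⟨x'', ?_⟩
  rw [show N n t (fun _ => 0) = 1 from prodPow_zero n (a n t), one_mul] at heq
  exact heq.symm

end
end Surj

section Assembly
variable {Γ : Type*} [Group Γ]

theorem prodPow_succAbove (m : ℕ) (g : Fin (m + 2) → Γ) (e : Fin (m + 2) → ℤ)
    (h1 : e 1 = 0) :
    prodPow (m + 2) g e =
      prodPow (m + 1) (fun k => g ((1 : Fin (m + 2)).succAbove k))
        (fun k => e ((1 : Fin (m + 2)).succAbove k)) := by
  have hι0 : (1 : Fin (m + 2)).succAbove 0 = 0 := rfl
  have hιs : ∀ k : Fin m, (1 : Fin (m + 2)).succAbove (Fin.succ k) = Fin.succ (Fin.succ k) := by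
    intro k
    rw [Fin.succAbove]
    rw [if_neg]
    simp [Fin.lt_def]
  unfold prodPow
  rw [List.finRange_succ, List.finRange_succ]
  simp only [List.map_cons, List.map_map, List.prod_cons]
  have h10 : (Fin.succ 0 : Fin (m + 2)) = 1 := rfl
  rw [hι0, h10, h1, zpow_zero, one_mul]
  have : ((fun k : Fin (m + 2) => g k ^ e k) ∘ Fin.succ ∘ Fin.succ) =
      ((fun k => g ((1 : Fin (m + 2)).succAbove k) ^ e ((1 : Fin (m + 2)).succAbove k)) ∘
        Fin.succ) := by
    funext k
    simp [Function.comp_def, hιs]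
  rw [this]

end Assembly

/-- If `G(t)` is consistent (with `n ≥ 2`), the subgroup `V(t) = ⟨a_1, a_3, …, a_n⟩` of
`G(t)` is isomorphic to the presented group `G(t_v)`, where `t_v` is the subfamily of `t` of
entries with all indices different from `2`; the isomorphism sends the generators of `G(t_v)`
to `a_1, a_3, …, a_n`.  Here the order embedding `(1 : Fin (m+2)).succAbove` realizes the
index set `{1, 3, …, n}` (0-based: all indices except `1`) inside `Fin (m+2)`. -/
theorem subgroup_V_iso (m : ℕ) (t : Fin (m + 2) → Fin (m + 2) → Fin (m + 2) → ℤ)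
    (hN : Function.Bijective (N (m + 2) t))
    (tv : Fin (m + 1) → Fin (m + 1) → Fin (m + 1) → ℤ)
    (htv : ∀ i j k : Fin (m + 1), tv i j k =
      t ((1 : Fin (m + 2)).succAbove i) ((1 : Fin (m + 2)).succAbove j)
        ((1 : Fin (m + 2)).succAbove k)) :
    ∃ φ : G (m + 1) tv ≃*
        (Subgroup.closure (Set.range fun i : Fin (m + 1) =>
          a (m + 2) t ((1 : Fin (m + 2)).succAbove i)) : Subgroup (G (m + 2) t)),
      ∀ i : Fin (m + 1),
        (φ (a (m + 1) tv i) : G (m + 2) t) = a (m + 2) t ((1 : Fin (m + 2)).succAbove i) := by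
  set ι : Fin (m + 1) → Fin (m + 2) := (1 : Fin (m + 2)).succAbove with hιdef
  have hιmono : StrictMono ι := Fin.strictMono_succAbove 1
  set f : Fin (m + 1) → G (m + 2) t := fun i => a (m + 2) t (ι i) with hfdef
  -- the relators of tv are killed
  have hrels : ∀ r ∈ rels (m + 1) tv, FreeGroup.lift f r = 1 := by
    rintro r ⟨i, j, hij, rfl⟩
    have hj1 : ¬ (ι j < 1) := by
      intro hc
      have hval : ((ι j : Fin (m + 2)) : ℕ) = 0 := by
        have := Fin.lt_def.1 hc
        simpa using this
      have h0 : ι j = ι 0 := Fin.ext (by rw [hval]; rfl)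
      have hj0 : j = 0 := hιmono.injective h0
      rw [hj0] at hij
      exact absurd hij (by simp)
    have hW : FreeGroup.lift f
        (prodPow (m + 1) FreeGroup.of (fun k => if j < k then tv i j k else 0)) =
        prodPow (m + 2) (a (m + 2) t)
          (fun k => if ι j < k then t (ι i) (ι j) k else 0) := by
      have hg2 : (fun k => (FreeGroup.lift f) (FreeGroup.of k)) =
          fun k : Fin (m + 1) => a (m + 2) t (ι k) := by
        funext k
        rw [FreeGroup.lift_apply_of, hfdef]
      have he2 : (fun k : Fin (m + 1) =>
            if ι j < ι k then t (ι i) (ι j) (ι k) else 0) =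
          fun k => if j < k then tv i j k else 0 := by
        funext k
        by_cases h : j < k
        · rw [if_pos (hιmono h), if_pos h, htv]
        · rw [if_neg (fun hc => h (hιmono.lt_iff_lt.1 hc)), if_neg h]
      rw [prodPow_hom, hg2]
      rw [prodPow_succAbove m (a (m + 2) t) _ (by simp [hj1])]
      rw [show ((1 : Fin (m + 2)).succAbove) = ι from rfl, he2]
    rw [map_mul, map_inv, map_mul, map_mul, map_mul, FreeGroup.lift_apply_of, FreeGroup.lift_apply_of, hW]
    simp only [hfdef]
    rw [rel_eq_s11 (m + 2) t (hιmono hij)]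
    group
  set φ' : G (m + 1) tv →* G (m + 2) t := PresentedGroup.toGroup hrels with hφ'def
  have hφ'of : ∀ i : Fin (m + 1), φ' (a (m + 1) tv i) = a (m + 2) t (ι i) := by
    intro i
    simp [hφ'def, a, hfdef]
  -- φ' ∘ N_tv = N_t ∘ insertNth
  have hφ'N : ∀ x : Fin (m + 1) → ℤ,
      φ' (N (m + 1) tv x) = N (m + 2) t (Fin.insertNth 1 (0 : ℤ) x) := by
    intro x
    have hg2 : (fun k => φ' (a (m + 1) tv k)) = fun k => a (m + 2) t (ι k) :=
      funext hφ'of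
    have he2 : (fun k : Fin (m + 1) => Fin.insertNth (α := fun _ => ℤ) 1 0 x (ι k)) = x := by
      funext k
      rw [hιdef, Fin.insertNth_apply_succAbove]
    rw [N, prodPow_hom (m + 1) φ' (a (m + 1) tv) x, hg2]
    rw [N, prodPow_succAbove m (a (m + 2) t) _ (by simp)]
    rw [show ((1 : Fin (m + 2)).succAbove) = ι from rfl, he2]
  have hinj : Function.Injective φ' := by
    rw [injective_iff_map_eq_one]
    intro g hg
    obtain ⟨x, rfl⟩ := Surj.N_surjective (m + 1) tv g
    rw [hφ'N] at hg
    have h0 : N (m + 2) t (Fin.insertNth 1 (0 : ℤ) x) = N (m + 2) t (fun _ => 0) := by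
      rw [hg, N, prodPow_zero]
    have := hN.1 h0
    have hx : x = fun _ => 0 := by
      funext k
      have := congrFun this (ι k)
      rwa [hιdef, Fin.insertNth_apply_succAbove] at this
    rw [hx, N, prodPow_zero]
  have hrange : φ'.range = Subgroup.closure (Set.range fun i : Fin (m + 1) =>
      a (m + 2) t ((1 : Fin (m + 2)).succAbove i)) := by
    rw [MonoidHom.range_eq_map, ← PresentedGroup.closure_range_of (rels (m + 1) tv),
      MonoidHom.map_closure, ← Set.range_comp]
    rfl
  refine ⟨(MulEquiv.ofBijective φ'.rangeRestrict
      ⟨fun x y hxy => hinj (Subtype.ext_iff.1 hxy),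
       φ'.rangeRestrict_surjective⟩).trans (MulEquiv.subgroupCongr hrange), ?_⟩
  intro i
  rw [MulEquiv.trans_apply, MulEquiv.subgroupCongr_apply]
  exact hφ'of i

end HallPoly
end
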